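/- For face percolation in ℝ^d with d ≥ 2, the critical probability satisfies p_c^face(d) ≥ 1/(6d−7). That is, if p < 1/(6d−7), then the probability that the open face cluster containing the fixed face Q₀ = [0,0] × [0,1]^{d−1} is infinite equals 0. -/

import Mathlib

open MeasureTheory Set Relation Filter

namespace HP

noncomputable section

/-- An elementary cube in `ℝ^d` is encoded by, for each coordinate, an integer `l`
and a Boolean which is `true` for the nondegenerate interval `[l, l+1]` and
`false` for the degenerate interval `[l, l]`. -/
abbrev Cube (d : ℕ) := Fin d → ℤ × Bool

/-- The elementary interval `[l, l+1]` (nondegenerate) or `{l}` (degenerate). -/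
def intervalSet (l : ℤ) (b : Bool) : Set ℝ :=
  if b then Set.Icc (l : ℝ) ((l : ℝ) + 1) else {(l : ℝ)}

/-- The subset of `ℝ^d` realized by an encoded elementary cube. -/
def cubeSet {d : ℕ} (c : Cube d) : Set (Fin d → ℝ) :=
  {x | ∀ i, x i ∈ intervalSet (c i).1 (c i).2}

/-- The dimension of an elementary cube: the number of nondegenerate factors. -/
def cdim {d : ℕ} (c : Cube d) : ℕ :=
  (Finset.univ.filter (fun i => (c i).2 = true)).card

/-- A face in `ℝ^d` is an elementary cube of dimension `d-1`. -/
def IsFace {d : ℕ} (c : Cube d) : Prop := cdim c = d - 1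

/-- Two faces are adjacent if their intersection is an elementary cube of dimension `d-2`. -/
def FaceAdj {d : ℕ} (Q Q' : Cube d) : Prop :=
  ∃ c : Cube d, cdim c = d - 2 ∧ cubeSet Q ∩ cubeSet Q' = cubeSet c

/-- The type of faces in `ℝ^d`. -/
abbrev Face (d : ℕ) := {c : Cube d // IsFace c}

/-- The fixed face `Q₀ = [0,0] × [0,1]^(d-1)`. -/
def Q0 (d : ℕ) : Cube d := fun i => if (i : ℕ) = 0 then ((0 : ℤ), false) else ((0 : ℤ), true)

/-- A measure on `{0,1}^I` is the Bernoulli(p) product measure: it is a probability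
measure and cylinder events have the product probabilities. -/
def IsBernoulliProduct {I : Type*} (p : ℝ) (μ : Measure (I → Bool)) : Prop :=
  IsProbabilityMeasure μ ∧
    ∀ (s : Finset I) (b : I → Bool),
      μ {ω | ∀ i ∈ s, ω i = b i}
        = ∏ i ∈ s, (if b i = true then ENNReal.ofReal p else ENNReal.ofReal (1 - p))

/-- Open connectivity between faces: a chain of open, pairwise adjacent faces. -/
def faceOpenConn {d : ℕ} (ω : Face d → Bool) : Face d → Face d → Prop :=
  Relation.ReflTransGen (fun A B : Face d => FaceAdj A.1 B.1 ∧ ω A = true ∧ ω B = true)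

/-- The open face cluster of a face `Q` (empty when `Q` is closed). -/
def faceCluster {d : ℕ} (ω : Face d → Bool) (Q : Face d) : Set (Face d) :=
  {Q' | ω Q = true ∧ ω Q' = true ∧ faceOpenConn ω Q Q'}

/-- The random cubical set: the union of all open faces. -/
def K {d : ℕ} (ω : Face d → Bool) : Set (Fin d → ℝ) :=
  ⋃ (Q : Face d) (_ : ω Q = true), cubeSet Q.1

/-- The dual vertex `x* = x + (1/2, …, 1/2)`. -/
def dualPt {d : ℕ} (x : Fin d → ℤ) : Fin d → ℝ := fun i => (x i : ℝ) + 1/2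

/-- The connected component of the complement of `K(ω)` containing the dual vertex `x*`. -/
def holeAt {d : ℕ} (ω : Face d → Bool) (x : Fin d → ℤ) : Set (Fin d → ℝ) :=
  connectedComponentIn (K ω)ᶜ (dualPt x)

/-- A hole is a bounded connected component of the complement of `K(ω)`. -/
def IsHole {d : ℕ} (ω : Face d → Bool) (D : Set (Fin d → ℝ)) : Prop :=
  (∃ a ∈ (K ω)ᶜ, D = connectedComponentIn (K ω)ᶜ a) ∧ Bornology.IsBounded D

/-- The dual vertex `x*` lies in a hole. -/
def IsHolePt {d : ℕ} (ω : Face d → Bool) (x : Fin d → ℤ) : Prop :=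
  dualPt x ∈ (K ω)ᶜ ∧ Bornology.IsBounded (holeAt ω x)

/-- Two holes are adjacent when they share a common boundary face. -/
def HoleAdj {d : ℕ} (ω : Face d → Bool) (D D' : Set (Fin d → ℝ)) : Prop :=
  D ≠ D' ∧ ∃ Q : Cube d, IsFace Q ∧ cubeSet Q ⊆ frontier D ∧ cubeSet Q ⊆ frontier D'

/-- Connectivity in the hole graph. -/
def HoleConn {d : ℕ} (ω : Face d → Bool) :
    Set (Fin d → ℝ) → Set (Fin d → ℝ) → Prop :=
  Relation.ReflTransGen (fun A B => IsHole ω A ∧ IsHole ω B ∧ HoleAdj ω A B)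

/-- The hole cluster of a hole `D`: all holes connected to it in the hole graph. -/
def holeCluster {d : ℕ} (ω : Face d → Bool) (D : Set (Fin d → ℝ)) :
    Set (Set (Fin d → ℝ)) :=
  {D' | IsHole ω D' ∧ HoleConn ω D D'}

/-- The dual vertex `x*` lies in a hole belonging to an infinite hole cluster. -/
def InfClusterAt {d : ℕ} (ω : Face d → Bool) (x : Fin d → ℤ) : Prop :=
  IsHolePt ω x ∧ (holeCluster ω (holeAt ω x)).Infinite

/-- `x* ↔_hole y*` : both dual vertices lie in holes belonging to the same hole cluster. -/
def HoleConnPts {d : ℕ} (ω : Face d → Bool) (x y : Fin d → ℤ) : Prop :=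
  IsHolePt ω x ∧ IsHolePt ω y ∧ HoleConn ω (holeAt ω x) (holeAt ω y)

/-- A set of holes is an infinite hole cluster. -/
def IsInfCluster {d : ℕ} (ω : Face d → Bool) (G : Set (Set (Fin d → ℝ))) : Prop :=
  (∃ D, IsHole ω D ∧ G = holeCluster ω D) ∧ G.Infinite

/-- Nearest-neighbour adjacency on `ℤ^d` (ℓ¹-distance one). -/
def adjZ {d : ℕ} (x y : Fin d → ℤ) : Prop := (∑ i, |x i - y i|) = 1

/-- The occupied cell of the dual vertex `x*`: `∏ [(x*)_i - 1/2, (x*)_i + 1/2] = ∏ [x_i, x_i+1]`. -/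
def cell {d : ℕ} (x : Fin d → ℤ) : Set (Fin d → ℝ) :=
  {y | ∀ i, y i ∈ Set.Icc (x i : ℝ) ((x i : ℝ) + 1)}

/-- The face separating the occupied cells of two adjacent dual vertices. -/
def faceBetween {d : ℕ} (x y : Fin d → ℤ) : Cube d :=
  fun i => if x i = y i then (x i, true) else (max (x i) (y i), false)

/-- The dual bond between adjacent dual vertices is open iff the transversal face is closed. -/
def dualOpen {d : ℕ} (ω : Face d → Bool) (x y : Fin d → ℤ) : Prop :=
  adjZ x y ∧ ∀ Q : Face d, Q.1 = faceBetween x y → ω Q = false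

/-- The open dual cluster of a dual vertex. -/
def dualCluster {d : ℕ} (ω : Face d → Bool) (x : Fin d → ℤ) : Set (Fin d → ℤ) :=
  {y | Relation.ReflTransGen (dualOpen ω) x y}

/-- The box `B̃(n)` of dual vertices `x*` with `‖x*‖∞ < n`, indexed by `x ∈ ℤ^d`. -/
def BnZ (d n : ℕ) : Set (Fin d → ℤ) := {y | ∀ i, -(n:ℤ) ≤ y i ∧ y i < n}

/-- The hole at `x*` contains no dual vertex other than `x*`. -/
def SingletonHole {d : ℕ} (ω : Face d → Bool) (x : Fin d → ℤ) : Prop :=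
  IsHolePt ω x ∧ ∀ y : Fin d → ℤ, dualPt y ∈ holeAt ω x → y = x

/-- Hole-graph connectivity avoiding the hole `D`. -/
def HoleConnAvoid {d : ℕ} (ω : Face d → Bool) (D : Set (Fin d → ℝ)) :
    Set (Fin d → ℝ) → Set (Fin d → ℝ) → Prop :=
  Relation.ReflTransGen
    (fun A B => IsHole ω A ∧ IsHole ω B ∧ HoleAdj ω A B ∧ A ≠ D ∧ B ≠ D)

/-- The connected components of the hole cluster of `D` after deleting the vertex `D`. -/
def delComponents {d : ℕ} (ω : Face d → Bool) (D : Set (Fin d → ℝ)) :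
    Set (Set (Set (Fin d → ℝ))) :=
  {Kc | ∃ E, IsHole ω E ∧ E ∈ holeCluster ω D ∧ E ≠ D ∧
        Kc = {F | IsHole ω F ∧ HoleConnAvoid ω D E F}}

/-- `x*` is a trifurcation: its hole is a singleton hole lying in an infinite hole
cluster, and deleting it leaves exactly three components, all infinite. -/
def Trifurcation {d : ℕ} (ω : Face d → Bool) (x : Fin d → ℤ) : Prop :=
  SingletonHole ω x ∧ (holeCluster ω (holeAt ω x)).Infinite ∧
  (delComponents ω (holeAt ω x)).Finite ∧ (delComponents ω (holeAt ω x)).ncard = 3 ∧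
  ∀ Kc ∈ delComponents ω (holeAt ω x), Kc.Infinite


open Finset List

variable {d : ℕ}

lemma intervalSet_self_mem (l : ℤ) (b : Bool) : ((l:ℝ)) ∈ intervalSet l b := by
  cases b <;> simp [intervalSet] <;> norm_num

lemma cubeSet_nonempty (c : Cube d) : (fun i => ((c i).1 : ℝ)) ∈ cubeSet c :=
  fun i => intervalSet_self_mem _ _

lemma coord_inter {A B C : Cube d}
    (h : cubeSet A ∩ cubeSet B = cubeSet C) (i : Fin d) :
    intervalSet (A i).1 (A i).2 ∩ intervalSet (B i).1 (B i).2
      = intervalSet (C i).1 (C i).2 := by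
  have hx : (fun j => ((C j).1 : ℝ)) ∈ cubeSet C := cubeSet_nonempty C
  have hxAB : (fun j => ((C j).1 : ℝ)) ∈ cubeSet A ∩ cubeSet B := by rw [h]; exact hx
  ext t
  constructor
  · rintro ⟨htA, htB⟩
    have : Function.update (fun j => ((C j).1 : ℝ)) i t ∈ cubeSet A ∩ cubeSet B := by
      constructor <;> intro k <;> rcases eq_or_ne k i with rfl | hk
      · simpa using htA
      · simpa [Function.update_of_ne hk] using hxAB.1 k
      · simpa using htB
      · simpa [Function.update_of_ne hk] using hxAB.2 k
    rw [h] at this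
    simpa using this i
  · intro ht
    have : Function.update (fun j => ((C j).1 : ℝ)) i t ∈ cubeSet C := by
      intro k; rcases eq_or_ne k i with rfl | hk
      · simpa using ht
      · simpa [Function.update_of_ne hk] using hx k
    rw [← h] at this
    exact ⟨by simpa using this.1 i, by simpa using this.2 i⟩

lemma interval_classify {l m n : ℤ} {b e f : Bool}
    (h : intervalSet l b ∩ intervalSet m e = intervalSet n f) :
    (f = true ↔ (b = true ∧ e = true ∧ l = m)) ∧
    (b = false → e = false → m = l) ∧
    (b = false → e = true → m = l - 1 ∨ m = l) ∧
    (b = true → e = false → m = l ∨ m = l + 1) ∧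
    (b = true → e = true → l ≠ m → (m = l - 1 ∨ m = l + 1)) := by
  have hn : ((n:ℝ)) ∈ intervalSet l b ∩ intervalSet m e := by
    rw [h]; exact intervalSet_self_mem _ _
  cases b <;> cases e <;>
    simp only [intervalSet, if_true, if_false, Bool.false_eq_true, reduceIte] at h hn
  all_goals simp only [Set.mem_inter_iff, Set.mem_singleton_iff, Set.mem_Icc] at hn
  · -- b = false, e = false
    obtain ⟨h1, h2⟩ := hn
    have hnl : n = l := by exact_mod_cast h1
    have hml : m = l := by rw [← hnl]; exact_mod_cast h2.symm
    have hf : f = false := by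
      by_contra hf
      simp only [Bool.not_eq_false] at hf
      subst hf
      simp only [intervalSet, if_true] at h
      have : ((n:ℝ)+1) ∈ ({(l:ℝ)} ∩ {(m:ℝ)} : Set ℝ) := by
        rw [h]; constructor <;> norm_num
      have := this.1
      simp only [Set.mem_singleton_iff] at this
      have : (n:ℝ) = l := by exact_mod_cast h1
      nlinarith [this]
    subst hf
    refine ⟨by simp, fun _ _ => hml, by simp, by simp, by simp⟩
  · -- b = false, e = true
    obtain ⟨h1, h2⟩ := hn
    have hnl : n = l := by exact_mod_cast h1
    have hm1 : (m:ℝ) ≤ n := h2.1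
    have hm2 : (n:ℝ) ≤ m + 1 := h2.2
    have hm1' : m ≤ n := by exact_mod_cast hm1
    have hm2' : n ≤ m + 1 := by exact_mod_cast hm2
    have hf : f = false := by
      by_contra hf
      simp only [Bool.not_eq_false] at hf
      subst hf
      simp only [intervalSet, if_true] at h
      have : ((n:ℝ)+1) ∈ ({(l:ℝ)} ∩ Icc (m:ℝ) (m+1) : Set ℝ) := by
        rw [h]; constructor <;> norm_num
      have h3 := this.1
      simp only [Set.mem_singleton_iff] at h3
      have h4 : (n:ℝ) = l := by exact_mod_cast h1
      nlinarith
    subst hf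
    exact ⟨by simp, by simp, fun _ _ => by omega, by simp, by simp⟩
  · -- b = true, e = false
    obtain ⟨h2, h1⟩ := hn
    have hnm : n = m := by exact_mod_cast h1
    have hm1' : l ≤ n := by exact_mod_cast h2.1
    have hm2' : n ≤ l + 1 := by exact_mod_cast h2.2
    have hf : f = false := by
      by_contra hf
      simp only [Bool.not_eq_false] at hf
      subst hf
      simp only [intervalSet, if_true] at h
      have : ((n:ℝ)+1) ∈ (Icc (l:ℝ) (l+1) ∩ {(m:ℝ)} : Set ℝ) := by
        rw [h]; constructor <;> norm_num
      have h3 := this.2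
      simp only [Set.mem_singleton_iff] at h3
      have h4 : (n:ℝ) = m := by exact_mod_cast h1
      nlinarith
    subst hf
    exact ⟨by simp, by simp, by simp, fun _ _ => by omega, by simp⟩
  · -- b = true, e = true
    obtain ⟨h1, h2⟩ := hn
    have hl1 : l ≤ n := by exact_mod_cast h1.1
    have hl2 : n ≤ l + 1 := by exact_mod_cast h1.2
    have hm1 : m ≤ n := by exact_mod_cast h2.1
    have hm2 : n ≤ m + 1 := by exact_mod_cast h2.2
    refine ⟨?_, by simp, by simp, by simp, fun _ _ hlm => by omega⟩
    constructor
    · intro hf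
      subst hf
      simp only [intervalSet, if_true] at h
      refine ⟨rfl, rfl, ?_⟩
      have hmem : ((n:ℝ)+1) ∈ (Icc (l:ℝ) (l+1) ∩ Icc (m:ℝ) (m+1) : Set ℝ) := by
        rw [h]; constructor <;> norm_num
      have a1 : (l:ℝ) ≤ n + 1 := hmem.1.1
      have a2 : ((n:ℝ)+1) ≤ l + 1 := hmem.1.2
      have a3 : ((n:ℝ)+1) ≤ m + 1 := hmem.2.2
      have b2 : n + 1 ≤ l + 1 := by exact_mod_cast a2
      have b3 : n + 1 ≤ m + 1 := by exact_mod_cast a3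
      omega
    · rintro ⟨-, -, rfl⟩
      by_contra hf
      simp only [Bool.not_eq_true] at hf
      subst hf
      simp only [intervalSet, if_false, Bool.false_eq_true, reduceIte] at h
      have hl : ((l:ℝ)) ∈ (Icc (l:ℝ) (l+1) ∩ Icc (l:ℝ) (l+1) : Set ℝ) := by
        constructor <;> constructor <;> norm_num
      have hl1' : ((l:ℝ)+1) ∈ (Icc (l:ℝ) (l+1) ∩ Icc (l:ℝ) (l+1) : Set ℝ) := by
        constructor <;> constructor <;> norm_num
      rw [h] at hl hl1'
      simp only [Set.mem_singleton_iff] at hl hl1'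
      nlinarith [hl, hl1']


def nbrT1 (A : Cube d) : Finset (Cube d) :=
  ((Finset.univ.filter fun j => (A j).2 = true) ×ˢ ({-1,1} : Finset ℤ)).image
    (fun js => Function.update A js.1 ((A js.1).1 + js.2, true))

def nbrT2 (A : Cube d) : Finset (Cube d) :=
  (((Finset.univ.filter fun i => (A i).2 = false) ×ˢ
      (Finset.univ.filter fun j => (A j).2 = true)) ×ˢ
      (({-1,0} : Finset ℤ) ×ˢ ({0,1} : Finset ℤ))).image
    (fun x => Function.update (Function.update A x.1.1 ((A x.1.1).1 + x.2.1, true))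
        x.1.2 ((A x.1.2).1 + x.2.2, false))

def nbr (A : Cube d) : Finset (Cube d) := nbrT1 A ∪ nbrT2 A

lemma filter_false_card {A : Cube d} (hd : 1 ≤ d) (hA : IsFace A) :
    (Finset.univ.filter fun i => (A i).2 = false).card = 1 := by
  have h1 : (Finset.univ.filter fun i => (A i).2 = false)
      = Finset.univ \ (Finset.univ.filter fun i => (A i).2 = true) := by
    ext k; simp [Bool.not_eq_true]
  have h2 := hA
  unfold IsFace cdim at h2
  rw [h1, Finset.card_sdiff_of_subset (Finset.filter_subset _ _), h2]
  simp only [Finset.card_univ, Fintype.card_fin]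
  omega

lemma card_nbr_le {A : Cube d} (hd : 1 ≤ d) (hA : IsFace A) :
    (nbr A).card ≤ 6 * d - 6 := by
  have hT : (Finset.univ.filter fun j => (A j).2 = true).card = d - 1 := hA
  have hF := filter_false_card hd hA
  have h1 : (nbrT1 A).card ≤ (d - 1) * 2 := by
    calc (nbrT1 A).card ≤ _ := Finset.card_image_le
    _ ≤ (d-1) * 2 := by rw [Finset.card_product, hT]; gcongr; simp
  have h2 : (nbrT2 A).card ≤ (d - 1) * 4 := by
    calc (nbrT2 A).card ≤ _ := Finset.card_image_le
    _ ≤ (d-1)*4 := by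
        rw [Finset.card_product, Finset.card_product, Finset.card_product, hT, hF]
        have : ({-1,0} : Finset ℤ).card ≤ 2 := by simp [Finset.card_insert_le]
        have : ({0,1} : Finset ℤ).card ≤ 2 := by simp [Finset.card_insert_le]
        calc 1 * (d-1) * (({-1,0} : Finset ℤ).card * ({0,1} : Finset ℤ).card)
            ≤ 1 * (d-1) * (2 * 2) := by gcongr <;> simp [Finset.card_insert_le]
          _ = (d-1) * 4 := by ring
  calc (nbr A).card ≤ (nbrT1 A).card + (nbrT2 A).card := Finset.card_union_le _ _
    _ ≤ (d-1)*2 + (d-1)*4 := by omega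
    _ ≤ 6*d - 6 := by omega

lemma nbr_symm {A B : Cube d} (h : B ∈ nbr A) : A ∈ nbr B := by
  rcases Finset.mem_union.1 h with h | h
  · obtain ⟨⟨j, s⟩, hmem, rfl⟩ := Finset.mem_image.1 h
    simp only [Finset.mem_product, Finset.mem_filter, Finset.mem_univ, true_and,
      Finset.mem_insert, Finset.mem_singleton] at hmem
    obtain ⟨hj, hs⟩ := hmem
    set B := Function.update A j ((A j).1 + s, true) with hB
    refine Finset.mem_union.2 (Or.inl (Finset.mem_image.2 ⟨⟨j, -s⟩, ?_, ?_⟩))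
    · simp only [Finset.mem_product, Finset.mem_filter, Finset.mem_univ, true_and,
        Finset.mem_insert, Finset.mem_singleton]
      refine ⟨?_, ?_⟩
      · simp [hB, Function.update_self]
      · show -s = -1 ∨ -s = 1; omega
    · funext k
      rcases eq_or_ne k j with rfl | hk
      · simp only [hB, Function.update_self]
        have : A k = ((A k).1, (A k).2) := rfl
        rw [this, hj]; congr 1; omega
      · simp [hB, Function.update_of_ne hk]
  · obtain ⟨⟨⟨i, j⟩, ⟨s, t⟩⟩, hmem, rfl⟩ := Finset.mem_image.1 h
    simp only [Finset.mem_product, Finset.mem_filter, Finset.mem_univ, true_and,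
      Finset.mem_insert, Finset.mem_singleton] at hmem
    obtain ⟨⟨hi, hj⟩, hs, ht⟩ := hmem
    have hij : i ≠ j := by intro hij; rw [hij, hj] at hi; exact absurd hi (by simp)
    set B := Function.update (Function.update A i ((A i).1 + s, true)) j
        ((A j).1 + t, false) with hB
    refine Finset.mem_union.2 (Or.inr (Finset.mem_image.2 ⟨⟨⟨j, i⟩, ⟨-t, -s⟩⟩, ?_, ?_⟩))
    · simp only [Finset.mem_product, Finset.mem_filter, Finset.mem_univ, true_and,
        Finset.mem_insert, Finset.mem_singleton]
      refine ⟨⟨?_, ?_⟩, ?_, ?_⟩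
      · simp [hB, Function.update_self]
      · simp [hB, Function.update_of_ne hij, Function.update_self]
      · show -t = -1 ∨ -t = 0; omega
      · show -s = 0 ∨ -s = 1; omega
    · funext k
      have hBj : B j = ((A j).1 + t, false) := by simp [hB, Function.update_self]
      have hBi : B i = ((A i).1 + s, true) := by
        simp [hB, Function.update_of_ne hij, Function.update_self]
      rcases eq_or_ne k j with rfl | hkj
      · rw [Function.update_of_ne hij.symm, Function.update_self, hBj]
        have : A k = ((A k).1, (A k).2) := rfl
        rw [this, hj]; congr 1; dsimp only; omega
      · rcases eq_or_ne k i with rfl | hki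
        · rw [Function.update_self, hBi]
          have : A k = ((A k).1, (A k).2) := rfl
          rw [this, hi]; congr 1; dsimp only; omega
        · rw [Function.update_of_ne hki, Function.update_of_ne hkj]
          simp [hB, Function.update_of_ne hki, Function.update_of_ne hkj]

lemma isFace_of_mem_nbr {A B : Cube d} (hA : IsFace A) (h : B ∈ nbr A) : IsFace B := by
  rcases Finset.mem_union.1 h with h | h
  · obtain ⟨⟨j, s⟩, hmem, rfl⟩ := Finset.mem_image.1 h
    simp only [Finset.mem_product, Finset.mem_filter, Finset.mem_univ, true_and,
      Finset.mem_insert, Finset.mem_singleton] at hmem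
    obtain ⟨hj, -⟩ := hmem
    unfold IsFace cdim at hA ⊢
    rw [← hA]
    congr 1
    refine Finset.filter_congr (fun k _ => ?_)
    rcases eq_or_ne k j with rfl | hk
    · simp [Function.update_self, hj]
    · simp [Function.update_of_ne hk]
  · obtain ⟨⟨⟨i, j⟩, ⟨s, t⟩⟩, hmem, rfl⟩ := Finset.mem_image.1 h
    simp only [Finset.mem_product, Finset.mem_filter, Finset.mem_univ, true_and,
      Finset.mem_insert, Finset.mem_singleton] at hmem
    obtain ⟨⟨hi, hj⟩, -, -⟩ := hmem
    have hij : i ≠ j := by intro hij; rw [hij, hj] at hi; exact absurd hi (by simp)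
    unfold IsFace cdim at hA ⊢
    set B := Function.update (Function.update A i ((A i).1 + s, true)) j
        ((A j).1 + t, false) with hB
    have hset : (Finset.univ.filter fun k => (B k).2 = true)
        = insert i ((Finset.univ.filter fun k => (A k).2 = true).erase j) := by
      ext k
      simp only [Finset.mem_filter, Finset.mem_univ, true_and, Finset.mem_insert,
        Finset.mem_erase]
      rcases eq_or_ne k j with rfl | hkj
      · simp [hB, Function.update_self, hij.symm]
      · rcases eq_or_ne k i with rfl | hki
        · simp [hB, Function.update_of_ne hkj, Function.update_self]
        · simp [hB, Function.update_of_ne hkj, Function.update_of_ne hki, hkj, hki]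
    rw [hset, Finset.card_insert_of_notMem, Finset.card_erase_of_mem]
    · rw [hA]
      have hd1 : 1 ≤ d := by
        rcases Nat.eq_zero_or_pos d with rfl | h; · exact absurd i.2 (by omega)
        · omega
      have : (Finset.univ.filter fun k => (A k).2 = true).card = d - 1 := hA
      have hjm : j ∈ Finset.univ.filter fun k => (A k).2 = true := by simp [hj]
      have : 1 ≤ d - 1 ∨ d = 1 := by omega
      omega
    · simp [hj]
    · simp [Finset.mem_erase, hi]



lemma exists_unique_deg {A : Cube d} (hd : 1 ≤ d) (hA : IsFace A) :
    ∃ i0, (A i0).2 = false ∧ ∀ j, (A j).2 = false → j = i0 := by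
  obtain ⟨i0, hi0⟩ := Finset.card_eq_one.1 (filter_false_card hd hA)
  refine ⟨i0, ?_, ?_⟩
  · have : i0 ∈ Finset.univ.filter fun i => (A i).2 = false := by rw [hi0]; simp
    simpa using this
  · intro j hj
    have : j ∈ Finset.univ.filter fun i => (A i).2 = false := by simp [hj]
    rw [hi0] at this; simpa using this

lemma mem_nbr_of_adj (hd : 2 ≤ d) {A B : Cube d} (hA : IsFace A) (hB : IsFace B)
    (h : FaceAdj A B) : B ∈ nbr A := by
  obtain ⟨C, hC, hint⟩ := h
  have cls := fun i => interval_classify (coord_inter hint i)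
  obtain ⟨i0, hi0, hi0u⟩ := exists_unique_deg (by omega) hA
  obtain ⟨j0, hj0, hj0u⟩ := exists_unique_deg (by omega) hB
  have hAi : ∀ i, i ≠ i0 → (A i).2 = true := by
    intro i hi
    cases hb : (A i).2
    · exact absurd (hi0u i hb) hi
    · rfl
  have hBi : ∀ i, i ≠ j0 → (B i).2 = true := by
    intro i hi
    cases hb : (B i).2
    · exact absurd (hj0u i hb) hi
    · rfl
  set S := Finset.univ.filter (fun i => (C i).2 = true) with hSdef
  have hScard : S.card = d - 2 := hC
  have hmemS : ∀ k, k ∈ S → A k = B k := by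
    intro k hk
    simp only [hSdef, Finset.mem_filter] at hk
    obtain ⟨h1, h2, h3⟩ := (cls k).1.1 hk.2
    exact Prod.ext h3 (h1.trans h2.symm)
  by_cases hji : j0 = i0
  · -- B degenerate in the same coordinate
    rw [hji] at hj0 hBi
    have hi0S : i0 ∉ S := by
      simp only [hSdef, Finset.mem_filter]
      rintro ⟨-, hk⟩
      have := ((cls i0).1.1 hk).1
      rw [hi0] at this; exact absurd this (by simp)
    have hDcard : (Finset.univ \ S).card = 2 := by
      rw [Finset.card_sdiff_of_subset (Finset.subset_univ S), hScard]
      simp only [Finset.card_univ, Fintype.card_fin]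
      omega
    obtain ⟨a, b, hab, hD⟩ := Finset.card_eq_two.1 hDcard
    have hi0D : i0 ∈ Finset.univ \ S := by simp [hi0S]
    have : ∃ j, j ≠ i0 ∧ Finset.univ \ S = {i0, j} := by
      rw [hD] at hi0D ⊢
      simp only [Finset.mem_insert, Finset.mem_singleton] at hi0D
      rcases hi0D with rfl | rfl
      · exact ⟨b, fun hb => hab hb.symm, rfl⟩
      · exact ⟨a, fun ha => hab ha, by rw [Finset.pair_comm]⟩
    obtain ⟨j, hjne, hDeq⟩ := this
    have hjS : j ∉ S := by
      have : j ∈ Finset.univ \ S := by rw [hDeq]; simp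
      simpa using this
    have hotherS : ∀ k, k ≠ i0 → k ≠ j → k ∈ S := by
      intro k h1 h2
      by_contra hk
      have : k ∈ Finset.univ \ S := by simp [hk]
      rw [hDeq] at this
      simp only [Finset.mem_insert, Finset.mem_singleton] at this
      tauto
    have hAj := hAi j hjne
    have hBj := hBi j hjne
    have hne : (A j).1 ≠ (B j).1 := by
      intro hv
      exact hjS (by simp [hSdef, (cls j).1.2 ⟨hAj, hBj, hv⟩])
    have hstep := (cls j).2.2.2.2 hAj hBj hne
    have hBeq : B = Function.update A j ((A j).1 + ((B j).1 - (A j).1), true) := by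
      funext k
      rcases eq_or_ne k j with rfl | hkj
      · rw [Function.update_self]
        have : B k = ((B k).1, (B k).2) := rfl
        rw [this, hBj]; congr 1; omega
      · rw [Function.update_of_ne hkj]
        rcases eq_or_ne k i0 with rfl | hki
        · have h2 := (cls k).2.1 hi0 hj0
          exact (Prod.ext h2.symm (hi0.trans hj0.symm)).symm
        · exact (hmemS k (hotherS k hki hkj)).symm
    rw [hBeq]
    refine Finset.mem_union.2 (Or.inl (Finset.mem_image.2 ⟨⟨j, (B j).1 - (A j).1⟩, ?_, rfl⟩))
    simp only [Finset.mem_product, Finset.mem_filter, Finset.mem_univ, true_and,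
      Finset.mem_insert, Finset.mem_singleton]
    exact ⟨hAj, by omega⟩
  · -- B degenerate in a different coordinate j0
    have hAj0 := hAi j0 hji
    have hBi0 := hBi i0 (fun hc => hji hc.symm)
    have hsub : S ⊆ Finset.univ \ ({i0, j0} : Finset (Fin d)) := by
      intro k hk
      simp only [hSdef, Finset.mem_filter] at hk
      obtain ⟨h1, h2, h3⟩ := (cls k).1.1 hk.2
      simp only [Finset.mem_sdiff, Finset.mem_univ, true_and, Finset.mem_insert,
        Finset.mem_singleton]
      push_neg
      constructor
      · rintro rfl; rw [hi0] at h1; exact absurd h1 (by simp)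
      · rintro rfl; rw [hj0] at h2; exact absurd h2 (by simp)
    have hcard2 : (Finset.univ \ ({i0, j0} : Finset (Fin d))).card = d - 2 := by
      rw [Finset.card_sdiff_of_subset (Finset.subset_univ _)]
      rw [Finset.card_insert_of_notMem (by simpa using fun hc => hji hc.symm)]
      simp only [Finset.card_univ, Fintype.card_fin, Finset.card_singleton]
    have hSeq : S = Finset.univ \ ({i0, j0} : Finset (Fin d)) :=
      Finset.eq_of_subset_of_card_le hsub (by omega)
    have hotherS : ∀ k, k ≠ i0 → k ≠ j0 → A k = B k := by
      intro k h1 h2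
      exact hmemS k (by rw [hSeq]; simp [h1, h2])
    have hs := (cls i0).2.2.1 hi0 hBi0
    have ht := (cls j0).2.2.2.1 hAj0 hj0
    have hBeq : B = Function.update (Function.update A i0
        ((A i0).1 + ((B i0).1 - (A i0).1), true)) j0
        ((A j0).1 + ((B j0).1 - (A j0).1), false) := by
      funext k
      rcases eq_or_ne k j0 with rfl | hkj
      · rw [Function.update_self]
        have : B k = ((B k).1, (B k).2) := rfl
        rw [this, hj0]; congr 1; omega
      · rw [Function.update_of_ne hkj]
        rcases eq_or_ne k i0 with rfl | hki
        · rw [Function.update_self]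
          have : B k = ((B k).1, (B k).2) := rfl
          rw [this, hBi0]; congr 1; omega
        · rw [Function.update_of_ne hki]
          exact (hotherS k hki hkj).symm
    rw [hBeq]
    refine Finset.mem_union.2 (Or.inr (Finset.mem_image.2
      ⟨⟨⟨i0, j0⟩, ⟨(B i0).1 - (A i0).1, (B j0).1 - (A j0).1⟩⟩, ?_, rfl⟩))
    simp only [Finset.mem_product, Finset.mem_filter, Finset.mem_univ, true_and,
      Finset.mem_insert, Finset.mem_singleton]
    exact ⟨⟨hi0, hAj0⟩, by omega, by omega⟩


open Finset List


lemma faceAdj_symm {A B : Cube d} (h : FaceAdj A B) : FaceAdj B A := by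
  obtain ⟨c, hc, hi⟩ := h
  exact ⟨c, hc, by rw [Set.inter_comm]; exact hi⟩

instance : DecidablePred (IsFace (d := d)) := fun c => by unfold IsFace; infer_instance

def nbrF (A : Face d) : Finset (Face d) := (nbr A.1).subtype IsFace

lemma mem_nbrF {A B : Face d} : B ∈ nbrF A ↔ B.1 ∈ nbr A.1 := Finset.mem_subtype

lemma card_nbrF_le (hd : 2 ≤ d) (A : Face d) : (nbrF A).card ≤ 6 * d - 6 := by
  calc (nbrF A).card = ((nbr A.1).filter IsFace).card := Finset.card_subtype _ _
    _ ≤ (nbr A.1).card := Finset.card_filter_le _ _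
    _ ≤ 6 * d - 6 := card_nbr_le (by omega) A.2

lemma nbrF_symm {A B : Face d} (h : B ∈ nbrF A) : A ∈ nbrF B :=
  mem_nbrF.2 (nbr_symm (mem_nbrF.1 h))

lemma mem_nbrF_of_adj (hd : 2 ≤ d) {A B : Face d} (h : FaceAdj A B.1) (hA : A.1 = A.1) :
    B ∈ nbrF A := mem_nbrF.2 (mem_nbr_of_adj hd A.2 B.2 h)

/-- one-step extension set for a path list (stored newest-first). -/
def ext1 (l : List (Face d)) : Finset (Face d) :=
  match l with
  | [] => ∅
  | [b] => nbrF b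
  | b :: a :: _ => (nbrF b).erase a

def paths (Q : Face d) : ℕ → Finset (List (Face d))
  | 0 => {[Q]}
  | n+1 => (paths Q n).biUnion fun l => (ext1 l).image (fun B => B :: l)

lemma paths_shape (Q : Face d) :
    ∀ n l, l ∈ paths Q n → l.length = n + 1 ∧ (∀ b a t, l = b :: a :: t → b ∈ nbrF a) := by
  intro n
  induction n with
  | zero => intro l hl; simp only [paths, Finset.mem_singleton] at hl; subst hl
            exact ⟨rfl, by rintro b a t ⟨⟩⟩
  | succ n ih =>
    intro l hl
    simp only [paths, Finset.mem_biUnion, Finset.mem_image] at hl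
    obtain ⟨l', hl', B, hB, rfl⟩ := hl
    obtain ⟨hlen, -⟩ := ih l' hl'
    refine ⟨by simp [hlen], ?_⟩
    intro b a t heq
    injection heq with h1 h2
    subst h1; subst h2
    cases t with
    | nil => simpa [ext1] using hB
    | cons x y => exact Finset.mem_of_mem_erase (by simpa [ext1] using hB)

lemma card_paths (hd : 2 ≤ d) (Q : Face d) :
    ∀ n, (paths Q (n+1)).card ≤ (6*d-6) * (6*d-7)^n := by
  have hstep : ∀ n l, l ∈ paths Q (n+1) → (ext1 l).card ≤ 6*d-7 := by
    intro n l hl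
    obtain ⟨hlen, hshape⟩ := paths_shape Q (n+1) l hl
    match l, hlen with
    | b :: a :: t, _ =>
      have hba : b ∈ nbrF a := hshape b a t rfl
      have hab : a ∈ nbrF b := nbrF_symm hba
      have : (ext1 (b :: a :: t)).card = (nbrF b).card - 1 := by
        simp [ext1, Finset.card_erase_of_mem hab]
      rw [this]
      have := card_nbrF_le hd b
      omega
  intro n
  induction n with
  | zero =>
    simp only [paths, pow_zero, mul_one]
    calc ((paths Q 0).biUnion fun l => (ext1 l).image (fun B => B :: l)).card
        ≤ ∑ l ∈ paths Q 0, ((ext1 l).image (fun B => B :: l)).card :=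
          Finset.card_biUnion_le
      _ ≤ ∑ l ∈ paths Q 0, (6*d-6) := by
          refine Finset.sum_le_sum fun l hl => ?_
          refine le_trans Finset.card_image_le ?_
          simp only [paths, Finset.mem_singleton] at hl; subst hl
          simpa [ext1] using card_nbrF_le hd Q
      _ = (paths Q 0).card * (6*d-6) := by rw [Finset.sum_const, smul_eq_mul]
      _ = 6*d-6 := by simp [paths]
  | succ n ih =>
    calc (paths Q (n+2)).card
        ≤ ∑ l ∈ paths Q (n+1), ((ext1 l).image (fun B => B :: l)).card :=
          Finset.card_biUnion_le
      _ ≤ ∑ l ∈ paths Q (n+1), (6*d-7) := by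
          refine Finset.sum_le_sum fun l hl => ?_
          exact le_trans Finset.card_image_le (hstep n l hl)
      _ = (paths Q (n+1)).card * (6*d-7) := by rw [Finset.sum_const, smul_eq_mul]
      _ ≤ ((6*d-6) * (6*d-7)^n) * (6*d-7) := by exact Nat.mul_le_mul_right _ ih
      _ = (6*d-6) * (6*d-7)^(n+1) := by ring

lemma mem_paths (hd : 2 ≤ d) (Q : Face d) :
    ∀ n (l : List (Face d)), l.length = n + 1 → l.getLast? = some Q → l.Nodup →
      l.Chain' (fun b a => FaceAdj b.1 a.1) → l ∈ paths Q n := by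
  intro n
  induction n with
  | zero =>
    intro l hlen hlast _ _
    match l, hlen with
    | [b], _ =>
      simp only [List.getLast?_singleton, Option.some_inj] at hlast
      subst hlast
      simp [paths]
  | succ n ih =>
    intro l hlen hlast hnd hch
    match l, hlen with
    | B :: a :: t, hlen =>
      have hl' : (a :: t) ∈ paths Q n := by
        refine ih (a :: t) (by simpa using hlen) ?_ (hnd.sublist (List.sublist_cons_self _ _)) hch.tail
        rw [← hlast, List.getLast?_cons_cons]
      have hBadj : FaceAdj B.1 a.1 := (List.isChain_cons_cons.1 hch).1
      have hBmem : B ∈ nbrF a := mem_nbrF.2 (mem_nbr_of_adj hd a.2 B.2 (faceAdj_symm hBadj))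
      simp only [paths, Finset.mem_biUnion, Finset.mem_image]
      refine ⟨a :: t, hl', B, ?_, rfl⟩
      cases t with
      | nil => simpa [ext1] using hBmem
      | cons a' t' =>
        simp only [ext1]
        refine Finset.mem_erase.2 ⟨?_, hBmem⟩
        intro hBa'
        subst hBa'
        simp at hnd

lemma chain'_splice {α : Type*} {r : α → α → Prop} {u v w : List α} {x : α}
    (h : List.Chain' r (u ++ (x :: (v ++ (x :: w))))) : List.Chain' r (u ++ (x :: w)) := by
  unfold List.Chain' at h ⊢; rw [List.isChain_split] at h
  have h2 : List.Chain' r ((x :: v) ++ (x :: w)) := h.2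
  unfold List.Chain' at h2; rw [List.isChain_split] at h2
  rw [List.isChain_split]
  exact ⟨h.1, h2.2⟩

lemma exists_nodup_chain' {α : Type*} [DecidableEq α] {r : α → α → Prop} :
    ∀ (N : ℕ) (l : List α), l.length ≤ N → List.Chain' r l →
      ∃ l', List.Chain' r l' ∧ l'.Nodup ∧ l'.head? = l.head? ∧
        l'.getLast? = l.getLast? ∧ ∀ x ∈ l', x ∈ l := by
  intro N
  induction N with
  | zero =>
    intro l hl _
    rw [Nat.le_zero, List.length_eq_zero_iff] at hl
    subst hl
    exact ⟨[], by simp [List.Chain']⟩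
  | succ N ih =>
    intro l hl hch
    by_cases hnd : l.Nodup
    · exact ⟨l, hch, hnd, rfl, rfl, fun x hx => hx⟩
    · have : ∃ x, l.Duplicate x := by
        by_contra hx
        push_neg at hx
        exact hnd (List.nodup_iff_forall_not_duplicate.2 hx)
      obtain ⟨x, hx⟩ := this
      have hsub : [x, x] <+ l := List.duplicate_iff_sublist.1 hx
      rw [List.cons_sublist_iff] at hsub
      obtain ⟨r₁, r₂, hl12, hxr₁, hxr₂⟩ := hsub
      have hxr₂' : x ∈ r₂ := (List.singleton_sublist).1 hxr₂
      obtain ⟨s, t, rfl⟩ := List.append_of_mem hxr₁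
      obtain ⟨s', t', rfl⟩ := List.append_of_mem hxr₂'
      have hldecomp : l = s ++ (x :: ((t ++ s') ++ (x :: t'))) := by
        rw [hl12]; simp
      have hch2 : List.Chain' r (s ++ (x :: t')) := by
        rw [hldecomp] at hch
        exact chain'_splice hch
      have hlen2 : (s ++ x :: t').length ≤ N := by
        have h1 := congrArg List.length hldecomp
        simp only [List.length_append, List.length_cons] at h1
        simp only [List.length_append, List.length_cons]
        omega
      obtain ⟨l', h1, h2, h3, h4, h5⟩ := ih (s ++ x :: t') hlen2 hch2
      refine ⟨l', h1, h2, ?_, ?_, ?_⟩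
      · rw [h3, hldecomp]
        cases s <;> simp
      · rw [h4, hldecomp]
        have e1 : s ++ (x :: ((t ++ s') ++ (x :: t'))) = (s ++ (x :: (t ++ s'))) ++ (x :: t') := by
          simp
        rw [e1, List.getLast?_append_of_ne_nil _ (by simp),
          List.getLast?_append_of_ne_nil _ (by simp : (x :: t') ≠ [])]
      · intro y hy
        have := h5 y hy
        rw [hldecomp]
        simp only [List.mem_append, List.mem_cons] at this ⊢
        tauto



def grow : Finset (Face d) → Finset (Face d) := fun s => s ∪ s.biUnion nbrF

lemma grow_mono : Monotone (grow (d := d)) := fun s t h =>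
  Finset.union_subset_union h (Finset.biUnion_subset_biUnion_of_subset_left _ h)

lemma subset_grow (s : Finset (Face d)) : s ⊆ grow s := Finset.subset_union_left

lemma subset_grow_iter (s : Finset (Face d)) : ∀ m, s ⊆ grow^[m] s := by
  intro m
  induction m with
  | zero => simp
  | succ m ih =>
    rw [Function.iterate_succ_apply]
    exact le_trans ih (grow_mono.iterate m (subset_grow s))

lemma grow_iter_le {s : Finset (Face d)} {k k' : ℕ} (h : k ≤ k') :
    grow^[k] s ⊆ grow^[k'] s := by
  obtain ⟨m, rfl⟩ := Nat.exists_eq_add_of_le h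
  rw [Nat.add_comm, Function.iterate_add_apply]
  exact subset_grow_iter _ m

lemma chain_mem_grow (hd : 2 ≤ d) (ω : Face d → Bool) :
    ∀ (l : List (Face d)) (x y : Face d),
      List.Chain (fun A B : Face d => FaceAdj A.1 B.1 ∧ ω A = true ∧ ω B = true) x l →
      (x :: l).getLast? = some y → y ∈ grow^[l.length] ({x} : Finset (Face d)) := by
  intro l
  induction l with
  | nil =>
    intro x y _ hlast
    simp only [List.getLast?_singleton, Option.some_inj] at hlast
    subst hlast
    simp
  | cons a t ih =>
    intro x y hch hlast
    unfold List.Chain at hch; rw [List.chain_cons] at hch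
    obtain ⟨⟨hadj, -, -⟩, hch'⟩ := hch
    have hy : y ∈ grow^[t.length] ({a} : Finset (Face d)) := by
      refine ih a y hch' ?_
      rw [← hlast, List.getLast?_cons_cons]
    have ha : ({a} : Finset (Face d)) ⊆ grow ({x} : Finset (Face d)) := by
      intro z hz
      simp only [Finset.mem_singleton] at hz
      subst hz
      refine Finset.mem_union.2 (Or.inr (Finset.mem_biUnion.2 ⟨x, by simp, ?_⟩))
      exact mem_nbrF.2 (mem_nbr_of_adj hd x.2 z.2 hadj)
    have := grow_mono.iterate t.length ha hy
    rw [← Function.iterate_succ_apply] at this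
    simpa using this

lemma chain_all_open (ω : Face d → Bool) :
    ∀ (l : List (Face d)) (x : Face d), ω x = true →
      List.Chain (fun A B : Face d => FaceAdj A.1 B.1 ∧ ω A = true ∧ ω B = true) x l →
      ∀ F ∈ x :: l, ω F = true := by
  intro l
  induction l with
  | nil =>
    intro x hx _ F hF
    simp only [List.mem_singleton] at hF
    subst hF; exact hx
  | cons a t ih =>
    intro x hx hch F hF
    unfold List.Chain at hch; rw [List.chain_cons] at hch
    rcases List.mem_cons.1 hF with rfl | hF'
    · exact hx
    · exact ih a hch.1.2.2 hch.2 F hF'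

lemma exists_good_path (hd : 2 ≤ d) (Q : Face d) (ω : Face d → Bool)
    (hinf : (faceCluster ω Q).Infinite) (n : ℕ) :
    ∃ l ∈ paths Q (n+1), l.Nodup ∧ ∀ F ∈ l, ω F = true := by
  classical
  obtain ⟨Q', hQ'cl, hQ'not⟩ := hinf.exists_notMem_finset (grow^[n+1] ({Q} : Finset (Face d)))
  obtain ⟨hωQ, hωQ', hconn⟩ := hQ'cl
  obtain ⟨l, hchain, hlast⟩ := List.exists_isChain_cons_of_relationReflTransGen hconn
  have hlast? : (Q :: l).getLast? = some Q' := by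
    rw [List.getLast?_eq_getLast (h := by simp), hlast]
  have hopen : ∀ F ∈ Q :: l, ω F = true := chain_all_open ω l Q hωQ hchain
  have hch' : List.Chain' (fun A B : Face d => FaceAdj A.1 B.1 ∧ ω A = true ∧ ω B = true)
      (Q :: l) := hchain
  obtain ⟨l₁, hch1, hnd1, hhead1, hlast1, hmem1⟩ :=
    exists_nodup_chain' (Q :: l).length (Q :: l) le_rfl hch'
  match l₁, hch1, hnd1, hhead1, hlast1, hmem1 with
  | q :: t₁, hch1, hnd1, hhead1, hlast1, hmem1 =>
  · have hqQ : q = Q := by simpa using hhead1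
    subst hqQ
    have hlen1 : n + 2 ≤ t₁.length := by
      by_contra hlen
      push_neg at hlen
      have hQ'mem : Q' ∈ grow^[t₁.length] ({q} : Finset (Face d)) := by
        refine chain_mem_grow hd ω t₁ q Q' hch1 ?_
        rw [hlast1, hlast?]
      exact hQ'not (grow_iter_le (by omega) hQ'mem)
    set L := (q :: t₁).take (n + 2) with hL
    have hLlen : L.length = n + 2 := by
      rw [hL, List.length_take]
      simp only [List.length_cons]
      omega
    have hLnd : L.Nodup := hnd1.sublist (List.take_sublist _ _)
    have hLch : List.Chain' (fun A B : Face d => FaceAdj A.1 B.1 ∧ ω A = true ∧ ω B = true) L :=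
      List.IsChain.take hch1 _
    have hLhead : L.head? = some q := by
      rw [hL]
      cases t₁ <;> simp
    refine ⟨L.reverse, ?_, List.nodup_reverse.2 hLnd, ?_⟩
    · refine mem_paths hd q (n+1) L.reverse (by simp [hLlen]) ?_ (List.nodup_reverse.2 hLnd) ?_
      · rw [List.getLast?_reverse, hLhead]
      · unfold List.Chain'; rw [List.isChain_reverse]
        exact List.IsChain.imp (fun a b h => faceAdj_symm h.1) hLch
    · intro F hF
      rw [List.mem_reverse] at hF
      exact hopen F (hmem1 F (List.mem_of_mem_take hF))



/-- in face percolation in `ℝ^d` (`d ≥ 2`) with parameter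
`p < 1/(6d-7)`, the open cluster of the face `Q₀` is almost surely finite;
hence `p_c^face(d) ≥ 1/(6d-7)`. -/
theorem face_percolation_subcritical {d : ℕ} (hd : 2 ≤ d) (p : ℝ) (hp0 : 0 ≤ p)
    (hp : p < 1 / (6 * (d : ℝ) - 7))
    (μ : Measure (Face d → Bool)) (hμ : IsBernoulliProduct p μ)
    (Q : Face d) (hQ : Q.1 = Q0 d) :
    μ {ω | (faceCluster ω Q).Infinite} = 0 := by
  classical
  have hdr : (2:ℝ) ≤ (d:ℝ) := by exact_mod_cast hd
  have hd7 : (0:ℝ) < 6 * (d:ℝ) - 7 := by linarith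
  have hp1 : p < 1 := by
    have h1 : 1 / (6 * (d:ℝ) - 7) ≤ 1 := by
      rw [div_le_one hd7]; linarith
    linarith
  have hcast : ((6*d-7 : ℕ) : ℝ) = 6 * (d:ℝ) - 7 := by
    have h7 : 7 ≤ 6*d := by omega
    push_cast [Nat.cast_sub h7]
    ring
  have hq : ((6*d-7 : ℕ) : ℝ) * p < 1 := by
    rw [hcast]
    have := (lt_div_iff₀ hd7).1 hp
    linarith
  set r : ENNReal := ENNReal.ofReal (((6*d-7 : ℕ) : ℝ) * p) with hr
  have hr1 : r < 1 := ENNReal.ofReal_lt_one.2 hq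
  set C : ENNReal := ((6*d-6 : ℕ) : ENNReal) with hC
  set S := {ω : Face d → Bool | (faceCluster ω Q).Infinite} with hS
  have hbound : ∀ n : ℕ, μ S ≤ C * r ^ n := by
    intro n
    set P := (paths Q (n+1)).filter List.Nodup with hP
    have hsub : S ⊆ ⋃ l ∈ P, {ω : Face d → Bool | ∀ F ∈ l, ω F = true} := by
      intro ω hω
      obtain ⟨l, hl, hnd, hop⟩ := exists_good_path hd Q ω hω n
      exact Set.mem_biUnion (Finset.mem_filter.2 ⟨hl, hnd⟩) hop
    have hmeas : ∀ l ∈ P, μ {ω : Face d → Bool | ∀ F ∈ l, ω F = true}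
        = (ENNReal.ofReal p) ^ (n+2) := by
      intro l hl
      rw [hP, Finset.mem_filter] at hl
      obtain ⟨hlp, hnd⟩ := hl
      have hlen : l.length = n + 2 := (paths_shape Q (n+1) l hlp).1
      have hev : {ω : Face d → Bool | ∀ F ∈ l, ω F = true}
          = {ω : Face d → Bool | ∀ F ∈ l.toFinset, ω F = (fun _ => true) F} := by
        ext ω; simp [List.mem_toFinset]
      rw [hev, hμ.2 l.toFinset (fun _ => true)]
      rw [Finset.prod_const, List.toFinset_card_of_nodup hnd, hlen]
      norm_num
    calc μ S ≤ μ (⋃ l ∈ P, {ω : Face d → Bool | ∀ F ∈ l, ω F = true}) := measure_mono hsub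
      _ ≤ ∑ l ∈ P, μ {ω : Face d → Bool | ∀ F ∈ l, ω F = true} :=
          measure_biUnion_finset_le P _
      _ = P.card * (ENNReal.ofReal p) ^ (n+2) := by
          rw [Finset.sum_congr rfl hmeas, Finset.sum_const, nsmul_eq_mul]
      _ ≤ ((6*d-6) * (6*d-7)^n : ℕ) * (ENNReal.ofReal p) ^ (n+2) := by
          gcongr
          exact_mod_cast le_trans (Nat.cast_le.2 (Finset.card_filter_le _ _))
            (Nat.cast_le.2 (card_paths hd Q n))
      _ ≤ C * r ^ n := by
          rw [Nat.cast_mul, Nat.cast_pow]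
          have hofp1 : ENNReal.ofReal p ≤ 1 := ENNReal.ofReal_le_one.2 hp1.le
          have hrfac : r = ((6*d-7 : ℕ) : ENNReal) * ENNReal.ofReal p := by
            rw [hr, ENNReal.ofReal_mul (by positivity), ENNReal.ofReal_natCast]
          calc (((6*d-6:ℕ)) : ENNReal) * ((6*d-7:ℕ) : ENNReal)^n * (ENNReal.ofReal p) ^ (n+2)
              = C * ((((6*d-7:ℕ)) : ENNReal) * ENNReal.ofReal p)^n * (ENNReal.ofReal p)^2 := by
                rw [mul_pow]; ring
            _ = C * r^n * (ENNReal.ofReal p)^2 := by rw [hrfac]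
            _ ≤ C * r^n * 1 := by
                gcongr
                exact pow_le_one₀ zero_le hofp1
            _ = C * r^n := by rw [mul_one]
  have htend : Tendsto (fun n : ℕ => C * r ^ n) atTop (nhds 0) := by
    have h0 := ENNReal.tendsto_pow_atTop_nhds_zero_of_lt_one hr1
    have := ENNReal.Tendsto.const_mul (a := C) h0 (Or.inr (by rw [hC]; exact ENNReal.natCast_ne_top _))
    simpa using this
  have : μ S ≤ 0 := ge_of_tendsto htend (Filter.Eventually.of_forall hbound)
  exact le_antisymm this zero_le

end
end HP
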